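/- arXiv:2012.15277 — 2 statements merged into one kernel-verified Lean document; each statement's English description precedes it below -/
import Mathlib

section
/- Let n ≥ 2 and q a primitive n-th root of unity, and let r, ℓ be integers with 2ℓ ≤ n+1. The 2×2 matrix Q = [[q^{r(1-r-ℓ)}(1-q^{1-ℓ}), q^{(r+1)(1-r-ℓ)}], [q^{r(2-r-ℓ)}, 0]] has -q^{-r²+r-rℓ-ℓ+1} as an eigenvalue, i.e., det(Q + q^{-r²+r-rℓ-ℓ+1}·I) = 0. -/
theorem stmt10 {k : Type*} [Field k] [CharZero k]
    (n : ℕ) (hn : 2 ≤ n) (q : k) (hq : IsPrimitiveRoot q n)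
    (r ℓ : ℤ) (hℓ : 1 ≤ ℓ) (h2ℓ : 2 * ℓ ≤ (n : ℤ) + 1) :
    let Q : Matrix (Fin 2) (Fin 2) k :=
      !![q ^ (r * (1 - r - ℓ)) * (1 - q ^ (1 - ℓ)), q ^ ((r + 1) * (1 - r - ℓ));
         q ^ (r * (2 - r - ℓ)), 0]
    (Q + q ^ (-r ^ 2 + r - r * ℓ - ℓ + 1) • 1).det = 0 := by
  intro Q
  have hq0 : q ≠ 0 := hq.ne_zero (by omega)
  have e1 : (-r ^ 2 + r - r * ℓ - ℓ + 1) = r * (1 - r - ℓ) + (1 - ℓ) := by ring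
  have e2 : (r + 1) * (1 - r - ℓ) + r * (2 - r - ℓ)
      = r * (1 - r - ℓ) + (r * (1 - r - ℓ) + (1 - ℓ)) := by ring
  simp only [Q, Matrix.det_fin_two, Matrix.add_apply, Matrix.smul_apply,
    Matrix.one_apply, Matrix.cons_val', Matrix.cons_val_zero, Matrix.cons_val_one,
    Matrix.head_cons, Matrix.empty_val', Matrix.cons_val_fin_one, Matrix.head_fin_const,
    Matrix.of_apply, Fin.isValue, e1]
  norm_num
  rw [← zpow_add₀ hq0 ((r + 1) * (1 - r - ℓ)), e2]
  simp only [zpow_add₀ hq0]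
  ring
end

section
/- Let n ≥ 2 and define sequences of nonnegative integers indexed by rows 1 ≤ k ≤ 2n-2 by the recursions of the Bratteli graphs Γ (partitions of k with at most two parts, edges given by adding a box) and Γ_n (same graph but with the irregular diamonds at the first critical line: no edge from the critical vertex to its northeast child and a double edge to its southwest child). If p_i^{(k)}, s_i^{(k)} denote path counts in Γ_n to the left/right of the first critical line and p̃_i^{(k)}, s̃_i^{(k)} the corresponding path counts in Γ, then for all 1 ≤ k ≤ 2n-2 and all valid indices i: p_i^{(k)} = p̃_i^{(k)} and p_i^{(k)} + s_i^{(k)} = s̃_i^{(k)}. -/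
/-- Path counts (from the vertex `{1}` at level 1) in the Bratteli diagram `Γ` of
partitions `(b1, b2)` with at most two parts (`b1 ≥ b2 ≥ 0`, `b1 + b2 = k` at
level `k`); edges add one box to either part, keeping `b1 ≥ b2`. -/
def gcount : ℕ → ℤ → ℤ → ℕ
  | 0, _, _ => 0
  | 1, b1, b2 => if b1 = 1 ∧ b2 = 0 then 1 else 0
  | k + 2, b1, b2 =>
    if b1 < b2 then 0
    else (if b2 ≤ b1 - 1 then gcount (k + 1) (b1 - 1) b2 else 0)
      + gcount (k + 1) b1 (b2 - 1)

/-- Path counts in the modified Bratteli diagram `Γ_n`, with the irregular diamonds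
at the first critical line (`b1 - b2 + 1 = n`): a critical vertex has no edge
increasing the second part (no northeast edge), and a vertex with
`b1 - b2 + 1 = n + 1` has a doubled edge increasing the second part
(double southwest edge). -/
def hcount (n : ℕ) : ℕ → ℤ → ℤ → ℕ
  | 0, _, _ => 0
  | 1, b1, b2 => if b1 = 1 ∧ b2 = 0 then 1 else 0
  | k + 2, b1, b2 =>
    if b1 < b2 then 0
    else (if b2 ≤ b1 - 1 then hcount n (k + 1) (b1 - 1) b2 else 0)
      + (if b1 - (b2 - 1) + 1 = (n : ℤ) then 0
         else if b1 - (b2 - 1) + 1 = (n : ℤ) + 1 then 2 else 1)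
        * hcount n (k + 1) b1 (b2 - 1)

lemma gzero : ∀ (k : ℕ) (b1 b2 : ℤ), b2 < 0 → gcount k b1 b2 = 0 := by
  intro k
  induction k using Nat.strong_induction_on with
  | _ k IH =>
    match k with
    | 0 => intro b1 b2 _; rfl
    | 1 => intro b1 b2 h; simp only [gcount, ite_eq_right_iff]; intro ⟨_, h2⟩; omega
    | (m+2) =>
      intro b1 b2 h
      simp only [gcount]
      rw [IH (m+1) (by omega) _ _ h, IH (m+1) (by omega) _ _ (by omega)]
      simp

lemma hzero (n : ℕ) : ∀ (k : ℕ) (b1 b2 : ℤ), b2 < 0 → hcount n k b1 b2 = 0 := by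
  intro k
  induction k using Nat.strong_induction_on with
  | _ k IH =>
    match k with
    | 0 => intro b1 b2 _; rfl
    | 1 => intro b1 b2 h; simp only [hcount, ite_eq_right_iff]; intro ⟨_, h2⟩; omega
    | (m+2) =>
      intro b1 b2 h
      simp only [hcount]
      rw [IH (m+1) (by omega) _ _ h, IH (m+1) (by omega) _ _ (by omega)]
      simp

lemma key (n : ℕ) (hn : 2 ≤ n) : ∀ k : ℕ, 1 ≤ k → k ≤ 2 * n - 2 →
    ∀ b1 b2 : ℤ, b1 + b2 = (k : ℤ) → 0 ≤ b2 → b2 ≤ b1 →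
    ((n : ℤ) < b1 - b2 + 1 → hcount n k b1 b2 = gcount k b1 b2) ∧
    (b1 - b2 + 1 = (n : ℤ) → hcount n k b1 b2 = gcount k b1 b2) ∧
    (b1 - b2 + 1 < (n : ℤ) →
      hcount n k b1 b2
          + hcount n k (b1 + ((n : ℤ) - (b1 - b2 + 1))) (b2 - ((n : ℤ) - (b1 - b2 + 1)))
        = gcount k b1 b2) := by
  intro k
  induction k using Nat.strong_induction_on with
  | _ k IH =>
  match k with
  | 0 => intro h; exact absurd h (by norm_num)
  | 1 =>
    intro _ _ b1 b2 hsum hb2 hord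
    have e1 : b1 = 1 := by omega
    have e2 : b2 = 0 := by omega
    subst e1; subst e2
    refine ⟨fun h => by exfalso; omega, fun _ => by simp [hcount, gcount], fun h3 => ?_⟩
    have hne : ¬((1:ℤ) + ((n:ℤ) - (1 - 0 + 1)) = 1 ∧ (0:ℤ) - ((n:ℤ) - (1 - 0 + 1)) = 0) := by
      rintro ⟨h1, _⟩; omega
    simp [hcount, gcount, hne]
    omega
  | (m+2) =>
    intro hk1 hk2 b1 b2 hsum hb2 hord
    have hm1 : (m+1 : ℕ) < m + 2 := by omega
    have hm2 : 1 ≤ m + 1 := by omega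
    have hm3 : m + 1 ≤ 2 * n - 2 := by omega
    have hms : ((m:ℤ) + 2) = ((m+2 : ℕ) : ℤ) := by push_cast; ring
    refine ⟨?_, ?_, ?_⟩
    · -- strictly beyond the critical line
      intro hgt
      have hne : b2 ≤ b1 - 1 := by omega
      have hrecg : gcount (m+2) b1 b2
          = gcount (m+1) (b1-1) b2 + gcount (m+1) b1 (b2-1) := by
        simp only [gcount]; rw [if_neg (by omega), if_pos hne]
      have hrech : hcount n (m+2) b1 b2
          = hcount n (m+1) (b1-1) b2 + hcount n (m+1) b1 (b2-1) := by
        simp only [hcount]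
        rw [if_neg (by omega), if_pos hne, if_neg (by omega), if_neg (by omega), one_mul]
      have hNE : hcount n (m+1) (b1-1) b2 = gcount (m+1) (b1-1) b2 := by
        rcases eq_or_lt_of_le (show (n:ℤ) ≤ (b1-1) - b2 + 1 by omega) with h | h
        · exact (IH (m+1) hm1 hm2 hm3 (b1-1) b2 (by push_cast; omega) hb2 (by omega)).2.1 h.symm
        · exact (IH (m+1) hm1 hm2 hm3 (b1-1) b2 (by push_cast; omega) hb2 (by omega)).1 h
      have hSW : hcount n (m+1) b1 (b2-1) = gcount (m+1) b1 (b2-1) := by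
        rcases le_or_gt 1 b2 with h | h
        · exact (IH (m+1) hm1 hm2 hm3 b1 (b2-1) (by push_cast; omega) (by omega)
            (by omega)).1 (by omega)
        · rw [hzero n (m+1) b1 (b2-1) (by omega), gzero (m+1) b1 (b2-1) (by omega)]
      rw [hrecg, hrech, hNE, hSW]
    · -- on the critical line
      intro heq
      have hne : b2 ≤ b1 - 1 := by omega
      have hrecg : gcount (m+2) b1 b2
          = gcount (m+1) (b1-1) b2 + gcount (m+1) b1 (b2-1) := by
        simp only [gcount]; rw [if_neg (by omega), if_pos hne]
      have hrech : hcount n (m+2) b1 b2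
          = hcount n (m+1) (b1-1) b2 + 2 * hcount n (m+1) b1 (b2-1) := by
        simp only [hcount]
        rw [if_neg (by omega), if_pos hne, if_neg (by omega), if_pos (by omega)]
      have h3 := (IH (m+1) hm1 hm2 hm3 (b1-1) b2 (by push_cast; omega) hb2
        (by omega)).2.2 (by omega)
      rw [show (b1-1) + ((n:ℤ) - ((b1-1) - b2 + 1)) = b1 by omega,
          show b2 - ((n:ℤ) - ((b1-1) - b2 + 1)) = b2 - 1 by omega] at h3
      have hSW : hcount n (m+1) b1 (b2-1) = gcount (m+1) b1 (b2-1) := by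
        rcases le_or_gt 1 b2 with h | h
        · exact (IH (m+1) hm1 hm2 hm3 b1 (b2-1) (by push_cast; omega) (by omega)
            (by omega)).1 (by omega)
        · rw [hzero n (m+1) b1 (b2-1) (by omega), gzero (m+1) b1 (b2-1) (by omega)]
      rw [hrecg, hrech]
      omega
    · -- strictly before the critical line
      intro hlt
      set d : ℤ := (n:ℤ) - (b1 - b2 + 1) with hd
      have hd1 : 1 ≤ d := by omega
      have hrecg : gcount (m+2) b1 b2
          = (if b2 ≤ b1 - 1 then gcount (m+1) (b1-1) b2 else 0)
            + gcount (m+1) b1 (b2-1) := by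
        simp only [gcount]; rw [if_neg (by omega)]
      have hrech : hcount n (m+2) b1 b2
          = (if b2 ≤ b1 - 1 then hcount n (m+1) (b1-1) b2 else 0)
            + (if b1 - (b2 - 1) + 1 = (n : ℤ) then 0
               else if b1 - (b2 - 1) + 1 = (n : ℤ) + 1 then 2 else 1)
              * hcount n (m+1) b1 (b2-1) := by
        simp only [hcount]; rw [if_neg (by omega)]
      have hrech' : hcount n (m+2) (b1+d) (b2-d)
          = hcount n (m+1) (b1+d-1) (b2-d) + hcount n (m+1) (b1+d) (b2-d-1) := by
        simp only [hcount]
        rw [if_neg (by omega), if_pos (by omega), if_neg (by omega), if_neg (by omega),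
          one_mul]
      -- mirrored statements from the induction hypothesis
      have hNE3 : b2 ≤ b1 - 1 →
          hcount n (m+1) (b1-1) b2 + hcount n (m+1) (b1+d) (b2-d-1)
            = gcount (m+1) (b1-1) b2 := by
        intro hne
        have h3 := (IH (m+1) hm1 hm2 hm3 (b1-1) b2 (by push_cast; omega) hb2
          hne).2.2 (by omega)
        rw [show (b1-1) + ((n:ℤ) - ((b1-1) - b2 + 1)) = b1 + d by omega,
            show b2 - ((n:ℤ) - ((b1-1) - b2 + 1)) = b2 - d - 1 by omega] at h3
        exact h3
      rcases le_or_gt b2 0 with hb0 | hb0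
      · -- b2 = 0 : everything to the southwest vanishes
        have hb1 : (2:ℤ) ≤ b1 := by omega
        rw [if_pos (by omega)] at hrech hrecg
        rw [hzero n (m+1) b1 (b2-1) (by omega), mul_zero, add_zero] at hrech
        rw [gzero (m+1) b1 (b2-1) (by omega), add_zero] at hrecg
        rw [hzero n (m+1) (b1+d-1) (b2-d) (by omega),
            hzero n (m+1) (b1+d) (b2-d-1) (by omega)] at hrech'
        have h3 := hNE3 (by omega)
        rw [hzero n (m+1) (b1+d) (b2-d-1) (by omega)] at h3
        rw [hrech, hrech', hrecg]
        omega
      · rcases eq_or_lt_of_le hord with hbb | hbb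
        · -- b1 = b2 : no northeast parent
          have hz : hcount n (m+1) (b1+d) (b2-d-1) = 0 := by
            refine hzero n (m+1) _ _ (by omega)
          rw [if_neg (by omega)] at hrech hrecg
          rcases eq_or_lt_of_le hn with hn2 | hn3
          · -- n = 2
            rw [if_pos (by omega), zero_mul, add_zero] at hrech
            have hSW := (IH (m+1) hm1 hm2 hm3 b1 (b2-1) (by push_cast; omega)
              (by omega) (by omega)).2.1 (by omega)
            have hrech'' : hcount n (m+2) (b1+d) (b2-d)
                = hcount n (m+1) b1 (b2-1) + hcount n (m+1) (b1+d) (b2-d-1) := by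
              rw [hrech', show b1 + d - 1 = b1 by omega, show b2 - d = b2 - 1 by omega]
            rw [hrecg, hrech, hrech'']
            omega
          · -- n ≥ 3
            rw [if_neg (by omega), if_neg (by omega), one_mul] at hrech
            have h3 := (IH (m+1) hm1 hm2 hm3 b1 (b2-1) (by push_cast; omega)
              (by omega) (by omega)).2.2 (by omega)
            rw [show b1 + ((n:ℤ) - (b1 - (b2-1) + 1)) = b1 + d - 1 by omega,
                show (b2-1) - ((n:ℤ) - (b1 - (b2-1) + 1)) = b2 - d by omega] at h3
            rw [hrecg, hrech, hrech']
            omega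
        · -- generic case: 1 ≤ b2, b2 < b1
          rw [if_pos (by omega)] at hrech hrecg
          have h3 := hNE3 (by omega)
          rcases eq_or_lt_of_le (show b1 - b2 + 1 ≤ (n:ℤ) - 1 by omega) with hc | hc
          · -- just below the line: d = 1
            rw [if_pos (by omega), zero_mul, add_zero] at hrech
            have hSW := (IH (m+1) hm1 hm2 hm3 b1 (b2-1) (by push_cast; omega)
              (by omega) (by omega)).2.1 (by omega)
            have hrech'' : hcount n (m+2) (b1+d) (b2-d)
                = hcount n (m+1) b1 (b2-1) + hcount n (m+1) (b1+d) (b2-d-1) := by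
              rw [hrech', show b1 + d - 1 = b1 by omega, show b2 - d = b2 - 1 by omega]
            rw [hrecg, hrech, hrech'']
            omega
          · -- d ≥ 2
            rw [if_neg (by omega), if_neg (by omega), one_mul] at hrech
            have h3b := (IH (m+1) hm1 hm2 hm3 b1 (b2-1) (by push_cast; omega)
              (by omega) (by omega)).2.2 (by omega)
            rw [show b1 + ((n:ℤ) - (b1 - (b2-1) + 1)) = b1 + d - 1 by omega,
                show (b2-1) - ((n:ℤ) - (b1 - (b2-1) + 1)) = b2 - d by omega] at h3b
            rw [hrecg, hrech, hrech']
            omega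

/-- Proposition 5.5: in rows `1 ≤ k ≤ 2n-2`, path counts in `Γ_n` strictly to the
left of the first critical line agree with those of `Γ` (`p_i = p̃_i`), and for a
vertex on or to the right of the critical line the `Γ`-count is the sum of the
`Γ_n`-count at that vertex and at its mirror image across the critical line
(`p_i + s_i = s̃_i`, with `p₀ = 0` on the line itself). -/
theorem stmt18 (n : ℕ) (hn : 2 ≤ n) (k : ℕ) (hk1 : 1 ≤ k) (hk2 : k ≤ 2 * n - 2)
    (b1 b2 : ℤ) (hsum : b1 + b2 = (k : ℤ)) (hb2 : 0 ≤ b2) (hord : b2 ≤ b1) :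
    ((n : ℤ) < b1 - b2 + 1 → hcount n k b1 b2 = gcount k b1 b2) ∧
    (b1 - b2 + 1 = (n : ℤ) → hcount n k b1 b2 = gcount k b1 b2) ∧
    (b1 - b2 + 1 < (n : ℤ) →
      hcount n k b1 b2
          + hcount n k (b1 + ((n : ℤ) - (b1 - b2 + 1))) (b2 - ((n : ℤ) - (b1 - b2 + 1)))
        = gcount k b1 b2) := by
  exact key n hn k hk1 hk2 b1 b2 hsum hb2 hord
end
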